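/- Let n and m be non-negative integers with m ≤ C(n,2), and let d ≥ 1 and 0 ≤ ℓ ≤ d − 1 be the unique integers such that m = C(d,2) + ℓ. Then there exists a finite simple graph with n vertices and m edges having exactly 2^d + 2^ℓ + n − d − 1 cliques. -/

import Mathlib

open Finset in
private def myG (n d ℓ : ℕ) : SimpleGraph (Fin n) where
  Adj a b := a ≠ b ∧ ((a.val < d ∧ b.val < d) ∨ (a.val < ℓ ∧ b.val = d) ∨ (b.val < ℓ ∧ a.val = d))
  symm := by constructor; intro a b h; exact ⟨h.1.symm, by tauto⟩
  loopless := by constructor; intro a h; exact h.1 rfl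

private lemma myG_adj (n d ℓ : ℕ) (a b : Fin n) : (myG n d ℓ).Adj a b ↔
    a ≠ b ∧ ((a.val < d ∧ b.val < d) ∨ (a.val < ℓ ∧ b.val = d) ∨ (b.val < ℓ ∧ a.val = d)) :=
  Iff.rfl

open Finset in
private lemma card_filter_lt' (n k : ℕ) (h : k ≤ n) :
    #(univ.filter fun a : Fin n => a.val < k) = k := by
  have heq : ((univ.filter fun a : Fin n => a.val < k).image Fin.val) = Finset.range k := by
    ext x
    simp only [mem_image, mem_filter, mem_univ, true_and, mem_range]
    constructor
    · rintro ⟨a, ha, rfl⟩; exact ha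
    · intro hx; exact ⟨⟨x, lt_of_lt_of_le hx h⟩, hx, rfl⟩
  have h2 := Finset.card_image_of_injective (univ.filter fun a : Fin n => a.val < k)
    Fin.val_injective
  rw [heq, Finset.card_range] at h2
  exact h2.symm

open Finset in
private lemma edge_count (n d ℓ : ℕ) (hdn : d ≤ n) (hℓd : ℓ < d) (hw : ℓ ≠ 0 → d < n) :
    Nat.card (myG n d ℓ).edgeSet = d.choose 2 + ℓ := by
  classical
  set G := myG n d ℓ with hG
  have hcard : Nat.card G.edgeSet = #G.edgeFinset := by
    rw [Nat.card_eq_fintype_card, SimpleGraph.edgeFinset_card]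
  have h2 := G.two_mul_card_edgeFinset
  set D : Finset (Fin n) := univ.filter (fun a => a.val < d) with hD
  set L : Finset (Fin n) := univ.filter (fun a => a.val < ℓ) with hL
  set W : Finset (Fin n) := univ.filter (fun a => a.val = d) with hW
  have hDc : #D = d := card_filter_lt' n d hdn
  have hLc : #L = ℓ := card_filter_lt' n ℓ (le_trans (le_of_lt hℓd) hdn)
  have hsplit : (univ.filter fun (x, y) => G.Adj x y) =
      ((D ×ˢ D).filter fun p => ¬ p.1 = p.2) ∪ (L ×ˢ W) ∪ (W ×ˢ L) := by
    ext ⟨a, b⟩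
    simp only [mem_filter, mem_union, mem_product, mem_univ, true_and, hG, myG_adj,
      hD, hL, hW, Ne, Fin.ext_iff]
    omega
  have hd1 : #((D ×ˢ D).filter fun p => ¬ p.1 = p.2) = d * d - d := by
    have hdiag : ((D ×ˢ D).filter fun p => p.1 = p.2) = D.image (fun a => (a, a)) := by
      ext ⟨a, b⟩
      simp only [mem_filter, mem_product, mem_image, Prod.mk.injEq]
      constructor
      · rintro ⟨⟨ha, _⟩, rfl⟩; exact ⟨a, ha, rfl, rfl⟩
      · rintro ⟨x, hx, rfl, rfl⟩; exact ⟨⟨hx, hx⟩, rfl⟩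
    have := Finset.card_filter_add_card_filter_not
      (s := D ×ˢ D) (p := fun p => p.1 = p.2)
    rw [hdiag, Finset.card_image_of_injective _ (fun a b h => (Prod.mk.injEq _ _ _ _ ▸ h).1),
      Finset.card_product, hDc] at this
    omega
  have hWc : #W = if d < n then 1 else 0 := by
    split_ifs with h
    · have : W = {(⟨d, h⟩ : Fin n)} := by
        ext a; simp [hW, Fin.ext_iff]
      rw [this, card_singleton]
    · have : W = ∅ := by
        ext a; simp only [hW, mem_filter, mem_univ, true_and, notMem_empty, iff_false]
        exact fun hh => h (hh ▸ a.isLt)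
      rw [this, card_empty]
  have hLW : #(L ×ˢ W) = ℓ := by
    rw [Finset.card_product, hLc, hWc]
    rcases Nat.eq_zero_or_pos ℓ with h | h
    · simp [h]
    · rw [if_pos (hw (Nat.pos_iff_ne_zero.mp h))]; ring
  have hWL : #(W ×ˢ L) = ℓ := by
    rw [Finset.card_product, hLc, hWc]
    rcases Nat.eq_zero_or_pos ℓ with h | h
    · simp [h]
    · rw [if_pos (hw (Nat.pos_iff_ne_zero.mp h))]; ring
  have hdisj1 : Disjoint (((D ×ˢ D).filter fun p => ¬ p.1 = p.2) ∪ (L ×ˢ W)) (W ×ˢ L) := by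
    rw [Finset.disjoint_left]
    rintro ⟨a, b⟩ hp hq
    simp only [mem_union, mem_filter, mem_product, hD, hL, hW, mem_filter, mem_univ,
      true_and] at hp hq
    omega
  have hdisj2 : Disjoint ((D ×ˢ D).filter fun p => ¬ p.1 = p.2) (L ×ˢ W) := by
    rw [Finset.disjoint_left]
    rintro ⟨a, b⟩ hp hq
    simp only [mem_filter, mem_product, hD, hL, hW, mem_filter, mem_univ, true_and] at hp hq
    omega
  rw [hsplit, Finset.card_union_of_disjoint hdisj1, Finset.card_union_of_disjoint hdisj2,
    hd1, hLW, hWL] at h2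
  rw [hcard]
  have hch : d.choose 2 = d * (d - 1) / 2 := Nat.choose_two_right d
  have hdd : d * d - d = d * (d - 1) := by
    rcases d with _ | k
    · simp
    · simp only [Nat.succ_sub_one]; ring_nf; omega
  omega

open Finset in
private lemma isClique_char (n d ℓ : ℕ) (hℓd : ℓ < d) (s : Finset (Fin n)) :
    (myG n d ℓ).IsClique ↑s ↔
      ((∀ a ∈ s, a.val < d) ∨
       ((∃ a ∈ s, a.val = d) ∧ ∀ a ∈ s, a.val < ℓ ∨ a.val = d) ∨
       (∃ a ∈ s, d < a.val ∧ s = {a})) := by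
  rw [SimpleGraph.isClique_iff]
  constructor
  · intro hs
    by_cases h1 : ∃ a ∈ s, d < a.val
    · obtain ⟨a, ha, hda⟩ := h1
      refine Or.inr (Or.inr ⟨a, ha, hda, ?_⟩)
      ext b
      simp only [mem_singleton]
      constructor
      · intro hb
        by_contra hne
        have := hs hb ha hne
        rw [myG_adj] at this
        omega
      · rintro rfl; exact ha
    by_cases h2 : ∃ a ∈ s, a.val = d
    · obtain ⟨w, hw, hwd⟩ := h2
      refine Or.inr (Or.inl ⟨⟨w, hw, hwd⟩, fun a ha => ?_⟩)
      by_cases hne : a = w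
      · subst hne; omega
      · have := hs ha hw hne
        rw [myG_adj] at this
        omega
    · refine Or.inl fun a ha => ?_
      push_neg at h1 h2
      have := h1 a ha
      have := h2 a ha
      omega
  · rintro (h | ⟨⟨w, hw, hwd⟩, h⟩ | ⟨a, _, hda, rfl⟩)
    · intro a ha b hb hab
      rw [myG_adj]
      exact ⟨hab, Or.inl ⟨h a ha, h b hb⟩⟩
    · intro a ha b hb hab
      rw [myG_adj]
      refine ⟨hab, ?_⟩
      have hab' : a.val ≠ b.val := fun hh => hab (Fin.ext hh)
      have := h a ha
      have := h b hb
      omega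
    · intro x hx y hy hxy
      simp only [Finset.coe_singleton, Set.mem_singleton_iff] at hx hy
      subst hx; subst hy
      exact absurd rfl hxy

/-- The number of cliques (sets of pairwise adjacent vertices, including the
empty clique) of a graph. -/
noncomputable def cliqueCount {V : Type*} (G : SimpleGraph V) : ℕ :=
  Nat.card {s : Finset V // G.IsClique (s : Set V)}

open Finset in
private lemma clique_count_main (n d ℓ : ℕ) (hdn : d < n) (hℓd : ℓ < d) :
    cliqueCount (myG n d ℓ) = 2 ^ d + 2 ^ ℓ + (n - d - 1) := by
  classical
  set w : Fin n := ⟨d, hdn⟩ with hw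
  set D : Finset (Fin n) := univ.filter (fun a => a.val < d) with hD
  set L : Finset (Fin n) := univ.filter (fun a => a.val < ℓ) with hL
  set U : Finset (Fin n) := univ.filter (fun a => d < a.val) with hU
  set F : Finset (Finset (Fin n)) :=
    D.powerset ∪ L.powerset.image (insert w) ∪ U.image (fun a => {a}) with hF
  have hwL : w ∉ L := by simp [hL, hw]; omega
  have hcc : cliqueCount (myG n d ℓ) =
      #(univ.filter fun s : Finset (Fin n) => (myG n d ℓ).IsClique ↑s) := by
    rw [cliqueCount, Nat.card_eq_fintype_card, Fintype.card_subtype]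
  have hfilt : (univ.filter fun s : Finset (Fin n) => (myG n d ℓ).IsClique ↑s) = F := by
    ext s
    rw [mem_filter]
    simp only [mem_univ, true_and, isClique_char n d ℓ hℓd, hF, mem_union, mem_image,
      mem_powerset]
    constructor
    · rintro (h | ⟨⟨a, ha, had⟩, h⟩ | ⟨a, ha, hda, rfl⟩)
      · exact Or.inl (Or.inl (fun x hx => by simpa [hD] using h x hx))
      · refine Or.inl (Or.inr ⟨s.erase w, ?_, ?_⟩)
        · intro x hx
          rw [mem_erase] at hx
          have := h x hx.2
          simp only [hL, mem_filter, mem_univ, true_and]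
          rcases this with h' | h'
          · exact h'
          · exact absurd (Fin.ext h' : x = w) hx.1
        · have haw : a = w := Fin.ext had
          rw [Finset.insert_erase (haw ▸ ha)]
      · exact Or.inr ⟨a, by simp [hU, hda], rfl⟩
    · rintro ((h | ⟨t, ht, rfl⟩) | ⟨a, ha, rfl⟩)
      · exact Or.inl (fun x hx => by simpa [hD] using h hx)
      · refine Or.inr (Or.inl ⟨⟨w, mem_insert_self _ _, rfl⟩, fun x hx => ?_⟩)
        rcases mem_insert.mp hx with rfl | hx
        · exact Or.inr rfl
        · exact Or.inl (by simpa [hL] using ht hx)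
      · simp only [hU, mem_filter, mem_univ, true_and] at ha
        exact Or.inr (Or.inr ⟨a, mem_singleton_self a, ha, rfl⟩)
  have hDc : #D = d := card_filter_lt' n d (le_of_lt hdn)
  have hLc : #L = ℓ := card_filter_lt' n ℓ (by omega)
  have hUc : #U = n - d - 1 := by
    have hcompl := Finset.card_filter_add_card_filter_not
      (s := (univ : Finset (Fin n))) (p := fun a => a.val < d + 1)
    have h1 : #(univ.filter fun a : Fin n => a.val < d + 1) = d + 1 :=
      card_filter_lt' n (d + 1) hdn
    have h2 : (univ.filter fun a : Fin n => ¬ a.val < d + 1) = U := by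
      ext a; simp only [mem_filter, mem_univ, true_and, hU]; omega
    rw [h1, h2, Finset.card_univ, Fintype.card_fin] at hcompl
    omega
  have hd12 : Disjoint D.powerset (L.powerset.image (insert w)) := by
    rw [Finset.disjoint_left]
    rintro s hs hsi
    obtain ⟨t, _, rfl⟩ := mem_image.mp hsi
    have := mem_powerset.mp hs (mem_insert_self w t)
    simp [hD, hw] at this
  have hd3 : Disjoint (D.powerset ∪ L.powerset.image (insert w)) (U.image (fun a => {a})) := by
    rw [Finset.disjoint_left]
    rintro s hs hsi
    obtain ⟨a, ha, rfl⟩ := mem_image.mp hsi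
    simp only [hU, mem_filter, mem_univ, true_and] at ha
    rcases mem_union.mp hs with h | h
    · have := mem_powerset.mp h (mem_singleton_self a)
      simp only [hD, mem_filter, mem_univ, true_and] at this
      omega
    · obtain ⟨t, _, heq⟩ := mem_image.mp h
      have : w ∈ ({a} : Finset (Fin n)) := heq ▸ mem_insert_self w t
      rw [mem_singleton] at this
      rw [← this] at ha
      simp [hw] at ha
  have hinj : Set.InjOn (insert w) (L.powerset : Set (Finset (Fin n))) := by
    intro t ht t' ht' heq
    rw [Finset.coe_powerset, Set.mem_preimage, Set.mem_powerset_iff] at ht ht'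
    have hwt : w ∉ t := fun h => hwL (ht h)
    have hwt' : w ∉ t' := fun h => hwL (ht' h)
    rw [← Finset.erase_insert hwt, ← Finset.erase_insert hwt', heq]
  have hcF : #F = 2 ^ d + 2 ^ ℓ + (n - d - 1) := by
    rw [hF, Finset.card_union_of_disjoint hd3, Finset.card_union_of_disjoint hd12,
      Finset.card_powerset, Finset.card_image_of_injOn hinj, Finset.card_powerset,
      Finset.card_image_of_injective _ (fun a b h => Finset.singleton_injective h),
      hDc, hLc, hUc]
  rw [hcc, hfilt, hcF]

open Finset in
private lemma clique_count_complete (n : ℕ) :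
    cliqueCount (myG n n 0) = 2 ^ n := by
  classical
  have hall : ∀ s : Finset (Fin n), (myG n n 0).IsClique ↑s := by
    intro s a ha b hb hab
    exact ⟨hab, Or.inl ⟨a.isLt, b.isLt⟩⟩
  rw [cliqueCount, Nat.card_eq_fintype_card, Fintype.card_subtype,
    filter_true_of_mem (fun s _ => hall s), Finset.card_univ, Fintype.card_finset,
    Fintype.card_fin]

/-- For all `n`, `m = C(d,2) + ℓ` with `m ≤ C(n,2)`, `d ≥ 1`, `0 ≤ ℓ ≤ d - 1`,
there is a graph with `n` vertices, `m` edges and exactly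
`2^d + 2^ℓ + n - d - 1` cliques. -/
theorem clique_count_lower_bound_exists (n m d ℓ : ℕ)
    (hmn : m ≤ n.choose 2) (hd : 1 ≤ d) (hℓ : ℓ ≤ d - 1)
    (hdecomp : m = d.choose 2 + ℓ) :
    ∃ G : SimpleGraph (Fin n), Nat.card G.edgeSet = m ∧
      (cliqueCount G : ℤ) = 2 ^ d + 2 ^ ℓ + n - d - 1 := by
  classical
  have hℓd : ℓ < d := by omega
  rcases Nat.eq_zero_or_pos n with hn | hn
  · -- n = 0 : m = 0, d = 1, ℓ = 0
    subst hn
    have hm0 : m = 0 := le_antisymm (by simpa using hmn) (Nat.zero_le m)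
    have hℓ0 : ℓ = 0 := by omega
    have hd0 : d.choose 2 = 0 := by omega
    have hd1 : d = 1 := by
      have := (Nat.choose_eq_zero_iff).mp hd0
      omega
    refine ⟨⊥, ?_, ?_⟩
    · rw [hm0]
      simp [Nat.card_eq_zero]
    · have : cliqueCount (⊥ : SimpleGraph (Fin 0)) = 1 := by
        rw [cliqueCount, Nat.card_eq_fintype_card, Fintype.card_subtype]
        have hall : ∀ s : Finset (Fin 0), (⊥ : SimpleGraph (Fin 0)).IsClique ↑s := by
          intro s a ha
          exact absurd a.isLt (by omega)
        rw [Finset.filter_true_of_mem (fun s _ => hall s), Finset.card_univ,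
          Fintype.card_finset, Fintype.card_fin]
        norm_num
      rw [this, hd1, hℓ0]
      norm_num
  · -- n ≥ 1
    have hdn : d ≤ n := by
      by_contra hcon
      push_neg at hcon
      have h1 : (n + 1).choose 2 ≤ d.choose 2 := Nat.choose_le_choose 2 hcon
      have h2 : (n + 1).choose 2 = n.choose 2 + n := by
        rw [Nat.choose_succ_succ]
        simp [Nat.choose_one_right, Nat.add_comm]
      omega
    rcases eq_or_lt_of_le hdn with hdeq | hdlt
    · -- d = n, ℓ = 0
      subst hdeq
      have hℓ0 : ℓ = 0 := by omega
      subst hℓ0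
      refine ⟨myG d d 0, ?_, ?_⟩
      · rw [edge_count d d 0 le_rfl hℓd (fun h => absurd rfl h)]
        omega
      · rw [clique_count_complete d]
        push_cast
        ring
    · refine ⟨myG n d ℓ, ?_, ?_⟩
      · rw [edge_count n d ℓ hdn hℓd (fun _ => hdlt)]
        omega
      · rw [clique_count_main n d ℓ hdlt hℓd]
        have : d + 1 ≤ n := hdlt
        push_cast [Nat.cast_sub (by omega : d + 1 ≤ n)]
        omega
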